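/- arXiv:1602.06025 — 2 statements merged into one kernel-verified Lean document; each statement's English description precedes it below -/
import Mathlib

section
/- With v_i = √(α_i/(α₀(α₀+1))) W^⊤ μ_i orthonormal as above, the whitened tensor M₃(W,W,W) = (2/(α₀+2)) Σ_{i=1}^k √(α₀(α₀+1)/α_i) v_i^{⊗3}; i.e., M₃(W,W,W) admits an orthogonal tensor decomposition with eigenvectors v_i and eigenvalues λ_i = (2/(α₀+2))√(α₀(α₀+1)/α_i). -/
open Matrix

/-- Multilinear contraction of a third-order tensor by a matrix in each mode. -/
def contract3 {n k : ℕ} (T : Fin n → Fin n → Fin n → ℝ)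
    (W : Matrix (Fin n) (Fin k) ℝ) : Fin k → Fin k → Fin k → ℝ :=
  fun p q r => ∑ a, ∑ b, ∑ c, T a b c * W a p * W b q * W c r

private lemma sum_comm4 {A B C I : Type*} [Fintype A] [Fintype B] [Fintype C] [Fintype I]
    (f : A → B → C → I → ℝ) :
    (∑ a, ∑ b, ∑ c, ∑ i, f a b c i) = ∑ i, ∑ a, ∑ b, ∑ c, f a b c i := by
  trans ∑ a, ∑ b, ∑ i, ∑ c, f a b c i
  · exact Finset.sum_congr rfl fun a _ => Finset.sum_congr rfl fun b _ => Finset.sum_comm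
  trans ∑ a, ∑ i, ∑ b, ∑ c, f a b c i
  · exact Finset.sum_congr rfl fun a _ => Finset.sum_comm
  · exact Finset.sum_comm

/-- With `v i = √(α i/(α₀(α₀+1))) • Wᵀ μ i` orthonormal (for `W` a whitening
matrix of `M₂`), the whitened tensor `M₃(W,W,W)` equals
`(2/(α₀+2)) ∑ i, √(α₀(α₀+1)/α i) v i ⊗ v i ⊗ v i`; i.e. it admits an orthogonal tensor
decomposition with eigenvectors `v i` and eigenvalues `(2/(α₀+2))√(α₀(α₀+1)/α i)`. -/
theorem whitened_M3_decomposition {V k : ℕ}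
    (α : Fin k → ℝ) (hα : ∀ i, 0 < α i)
    (μt : Fin k → Fin V → ℝ)
    (M2 : Matrix (Fin V) (Fin V) ℝ)
    (hM2 : M2 = ∑ i, (α i / ((∑ l, α l) * ((∑ l, α l) + 1))) •
        Matrix.vecMulVec (μt i) (μt i))
    (M3 : Fin V → Fin V → Fin V → ℝ)
    (hM3 : M3 = fun a b c =>
      (2 / ((∑ l, α l) * ((∑ l, α l) + 1) * ((∑ l, α l) + 2))) *
        ∑ i, α i * (μt i a * μt i b * μt i c))
    (W : Matrix (Fin V) (Fin k) ℝ)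
    (hW : Wᵀ * M2 * W = 1)
    (v : Fin k → Fin k → ℝ)
    (hv : ∀ i, v i = Real.sqrt (α i / ((∑ l, α l) * ((∑ l, α l) + 1))) • (Wᵀ.mulVec (μt i)))
    (hortho : ∀ i j, v i ⬝ᵥ v j = if i = j then 1 else 0) :
    ∀ p q r, contract3 M3 W p q r
      = (2 / ((∑ l, α l) + 2)) *
          ∑ i, Real.sqrt ((∑ l, α l) * ((∑ l, α l) + 1) / α i) * (v i p * v i q * v i r) := by
  intro p q r
  have hspos : 0 < ∑ l, α l := Finset.sum_pos (fun i _ => hα i) ⟨p, Finset.mem_univ p⟩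
  set s := ∑ l, α l with hsdef
  set m : Fin k → Fin k → ℝ := fun i => Wᵀ.mulVec (μt i) with hm
  have hLHS : contract3 M3 W p q r
      = ∑ i, (2 / (s * (s+1) * (s+2))) * α i * (m i p * m i q * m i r) := by
    simp only [contract3, hM3]
    have h1 : ∀ a b c : Fin V,
        (2 / (s*(s+1)*(s+2)) * ∑ i, α i * (μt i a * μt i b * μt i c)) * W a p * W b q * W c r
        = ∑ i, (2 / (s*(s+1)*(s+2))) * α i *
            ((W a p * μt i a) * ((W b q * μt i b) * (W c r * μt i c))) := by
      intro a b c
      rw [Finset.mul_sum, Finset.sum_mul, Finset.sum_mul, Finset.sum_mul]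
      exact Finset.sum_congr rfl fun i _ => by ring
    simp_rw [h1]
    rw [sum_comm4]
    refine Finset.sum_congr rfl fun i _ => ?_
    have hmp : ∀ x, m i x = ∑ a, W a x * μt i a := by
      intro x
      simp [hm, Matrix.mulVec, dotProduct, Matrix.transpose_apply]
    simp_rw [← Finset.mul_sum, ← Finset.sum_mul, hmp]
    ring
  rw [hLHS, Finset.mul_sum]
  refine Finset.sum_congr rfl fun i _ => ?_
  have hαi := hα i
  have ht : 0 < α i / (s * (s+1)) := by positivity
  have hvp : ∀ x, v i x = Real.sqrt (α i / (s * (s+1))) * m i x := by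
    intro x; rw [hv i]; simp [hm]
  simp_rw [hvp]
  have hsqrt : Real.sqrt (s * (s+1) / α i) = (Real.sqrt (α i / (s * (s+1))))⁻¹ := by
    rw [← Real.sqrt_inv]
    congr 1
    field_simp
  rw [hsqrt]
  set u := Real.sqrt (α i / (s * (s+1))) with hu
  have h3 : u ^ 2 = α i / (s * (s+1)) := Real.sq_sqrt ht.le
  have hne : u ≠ 0 := by positivity
  have key : u⁻¹ * (u * m i p * (u * m i q) * (u * m i r))
      = (α i / (s * (s+1))) * (m i p * m i q * m i r) := by
    rw [← h3]; field_simp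
  rw [key]
  have h1 : s * (s+1) ≠ 0 := by positivity
  have h2 : s + 2 ≠ 0 := by positivity
  field_simp
end

section
/- Suppose M_y(W,W) = (2/(α₀+2)) Σ_i η_i v_i v_i^⊤ with {v_i} orthonormal, and let v̂_i be a unit vector and M̂_y(Ŵ,Ŵ) a matrix with ‖M̂_y(Ŵ,Ŵ) − M_y(W,W)‖ ≤ ε_{y,w}. Define η̂_i = ((α₀+2)/2) v̂_i^⊤ M̂_y(Ŵ,Ŵ) v̂_i. Then |η_i − η̂_i| ≤ 2‖η‖·‖v̂_i − v_i‖ + ((α₀+2)/2)(1 + 2‖v̂_i − v_i‖)·ε_{y,w}. -/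
open scoped RealInnerProductSpace

lemma eta_quad_bound {k : ℕ}
    (α0 : ℝ) (hα0 : 0 < α0)
    (η : EuclideanSpace ℝ (Fin k))
    (v : Fin k → EuclideanSpace ℝ (Fin k))
    (hortho : Orthonormal ℝ v)
    (A : EuclideanSpace ℝ (Fin k) →L[ℝ] EuclideanSpace ℝ (Fin k))
    (hA : ∀ x, A x = ∑ i, ((2 / (α0 + 2)) * η i * ⟪v i, x⟫) • v i)
    (u x : EuclideanSpace ℝ (Fin k)) :
    |⟪u, A x⟫| ≤ 2 / (α0 + 2) * ‖η‖ * (‖u‖ * ‖x‖) := by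
  set w : EuclideanSpace ℝ (Fin k) := WithLp.toLp 2 (fun j => ⟪v j, u⟫ * ⟪v j, x⟫) with hw
  have hwj : ∀ j, w j = ⟪v j, u⟫ * ⟪v j, x⟫ := fun j => rfl
  have hα2 : (0:ℝ) < α0 + 2 := by linarith
  have hax : ⟪u, A x⟫ = 2 / (α0 + 2) * ⟪η, w⟫ := by
    rw [hA x, inner_sum, PiLp.inner_apply, Finset.mul_sum]
    refine Finset.sum_congr rfl fun j _ => ?_
    rw [real_inner_smul_right]
    simp only [RCLike.inner_apply, conj_trivial, hwj]
    rw [real_inner_comm u (v j)]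
    ring
  have hwnn : ‖w‖ ≤ ‖u‖ * ‖x‖ := by
    have h1 : ‖w‖ ^ 2 = ∑ j, (⟪v j, u⟫ * ⟪v j, x⟫) ^ 2 := by
      rw [← real_inner_self_eq_norm_sq, PiLp.inner_apply]
      refine Finset.sum_congr rfl fun j _ => ?_
      simp only [hwj, RCLike.inner_apply, conj_trivial, sq]
    have hbu : ∑ j, ⟪v j, u⟫ ^ 2 ≤ ‖u‖ ^ 2 := by
      have := hortho.sum_inner_products_le (s := Finset.univ) u
      simpa [Real.norm_eq_abs, sq_abs] using this
    have hbx : ∑ j, ⟪v j, x⟫ ^ 2 ≤ ‖x‖ ^ 2 := by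
      have := hortho.sum_inner_products_le (s := Finset.univ) x
      simpa [Real.norm_eq_abs, sq_abs] using this
    have h2 : ∑ j, (⟪v j, u⟫ * ⟪v j, x⟫) ^ 2
        ≤ (∑ j, ⟪v j, u⟫ ^ 2) * (∑ j, ⟪v j, x⟫ ^ 2) := by
      calc ∑ j, (⟪v j, u⟫ * ⟪v j, x⟫) ^ 2
          = ∑ j, (⟪v j, u⟫ ^ 2) * (⟪v j, x⟫ ^ 2) := by
            refine Finset.sum_congr rfl fun j _ => ?_; ring
        _ ≤ ∑ j, (⟪v j, u⟫ ^ 2) * (∑ j', ⟪v j', x⟫ ^ 2) := by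
            refine Finset.sum_le_sum fun j _ => ?_
            refine mul_le_mul_of_nonneg_left ?_ (sq_nonneg _)
            exact Finset.single_le_sum (f := fun j' => (⟪v j', x⟫ : ℝ) ^ 2)
                (fun _ _ => sq_nonneg _) (Finset.mem_univ j)
        _ = (∑ j, ⟪v j, u⟫ ^ 2) * (∑ j, ⟪v j, x⟫ ^ 2) := by
            rw [← Finset.sum_mul]
    have ha : (0:ℝ) ≤ ∑ j, ⟪v j, u⟫ ^ 2 := Finset.sum_nonneg fun _ _ => sq_nonneg _
    have hb : (0:ℝ) ≤ ∑ j, ⟪v j, x⟫ ^ 2 := Finset.sum_nonneg fun _ _ => sq_nonneg _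
    have h3 : ‖w‖ ^ 2 ≤ (‖u‖ * ‖x‖) ^ 2 := by
      have hux : (0:ℝ) ≤ ‖x‖ ^ 2 := sq_nonneg _
      calc ‖w‖ ^ 2 ≤ (∑ j, ⟪v j, u⟫ ^ 2) * (∑ j, ⟪v j, x⟫ ^ 2) := by rw [h1]; exact h2
        _ ≤ ‖u‖ ^ 2 * ‖x‖ ^ 2 := by nlinarith
        _ = (‖u‖ * ‖x‖) ^ 2 := by ring
    nlinarith [norm_nonneg w, mul_nonneg (norm_nonneg u) (norm_nonneg x)]
  have hcs : |⟪η, w⟫| ≤ ‖η‖ * ‖w‖ := abs_real_inner_le_norm η w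
  rw [hax, abs_mul]
  have hc : 0 ≤ 2 / (α0 + 2) := by positivity
  rw [abs_of_nonneg hc, mul_assoc]
  refine mul_le_mul_of_nonneg_left ?_ hc
  calc |⟪η, w⟫| ≤ ‖η‖ * ‖w‖ := hcs
    _ ≤ ‖η‖ * (‖u‖ * ‖x‖) := mul_le_mul_of_nonneg_left hwnn (norm_nonneg η)

/-- Power-update perturbation bound for recovering `η i`.  If
`M_y(W,W) = (2/(α₀+2)) ∑ i, η i v i v iᵀ` with `{v i}` orthonormal, `v̂ i` are unit vectors,
and `‖M̂_y(Ŵ,Ŵ) − M_y(W,W)‖ ≤ ε`, then for `η̂ i = ((α₀+2)/2) ⟪v̂ i, M̂_y(Ŵ,Ŵ) v̂ i⟫`,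
`|η i − η̂ i| ≤ 2‖η‖‖v̂ i − v i‖ + ((α₀+2)/2)(1 + 2‖v̂ i − v i‖) ε`. -/
theorem eta_perturbation_bound {k : ℕ}
    (α0 : ℝ) (hα0 : 0 < α0)
    (η : EuclideanSpace ℝ (Fin k))
    (v vh : Fin k → EuclideanSpace ℝ (Fin k))
    (hortho : Orthonormal ℝ v)
    (hvh : ∀ i, ‖vh i‖ = 1)
    (A Ah : EuclideanSpace ℝ (Fin k) →L[ℝ] EuclideanSpace ℝ (Fin k))
    (hA : ∀ x, A x = ∑ i, ((2 / (α0 + 2)) * η i * ⟪v i, x⟫) • v i)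
    (ε : ℝ)
    (hAh : ‖Ah - A‖ ≤ ε) :
    ∀ i, |η i - ((α0 + 2) / 2) * ⟪vh i, Ah (vh i)⟫| ≤
      2 * ‖η‖ * ‖vh i - v i‖ + ((α0 + 2) / 2) * (1 + 2 * ‖vh i - v i‖) * ε := by
  intro i
  have hα2 : (0:ℝ) < α0 + 2 := by linarith
  have hεnn : 0 ≤ ε := le_trans (norm_nonneg _) hAh
  set c : ℝ := (α0 + 2) / 2 with hc
  have hcpos : 0 < c := by positivity
  set d : EuclideanSpace ℝ (Fin k) := vh i - v i with hd
  have hij : ∀ a b, ⟪v a, v b⟫ = if a = b then (1:ℝ) else 0 := by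
    intro a b
    have := orthonormal_iff_ite.mp hortho a b
    simpa using this
  have hvi : ⟪v i, A (v i)⟫ = 2 / (α0 + 2) * η i := by
    rw [hA, inner_sum, Finset.sum_eq_single i]
    · rw [real_inner_smul_right, hij i i]
      simp
    · intro j _ hj
      rw [real_inner_smul_right, hij i j, if_neg (Ne.symm hj), mul_zero]
    · intro h; exact absurd (Finset.mem_univ i) h
  have hηi : η i = c * ⟪v i, A (v i)⟫ := by
    rw [hvi, hc]; field_simp
  have hv' : vh i = v i + d := by rw [hd]; abel
  have hsplit : ⟪vh i, Ah (vh i)⟫ =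
      ⟪v i, A (v i)⟫ + ⟪v i, A d⟫ + ⟪d, A (vh i)⟫ + ⟪vh i, (Ah - A) (vh i)⟫ := by
    have h1 : (Ah - A) (vh i) = Ah (vh i) - A (vh i) := rfl
    have h2 : ⟪vh i, Ah (vh i)⟫ = ⟪vh i, A (vh i)⟫ + ⟪vh i, (Ah - A) (vh i)⟫ := by
      rw [h1, inner_sub_right]; ring
    have h3 : ⟪vh i, A (vh i)⟫ = ⟪v i, A (vh i)⟫ + ⟪d, A (vh i)⟫ := by
      rw [hv', inner_add_left]
    have h4 : ⟪v i, A (vh i)⟫ = ⟪v i, A (v i)⟫ + ⟪v i, A d⟫ := by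
      rw [hv', map_add, inner_add_right]
    rw [h2, h3, h4]
  have hnvi : ‖v i‖ = 1 := hortho.1 i
  have b1 : |⟪v i, A d⟫| ≤ 2 / (α0 + 2) * ‖η‖ * ‖d‖ := by
    have := eta_quad_bound α0 hα0 η v hortho A hA (v i) d
    rwa [hnvi, one_mul] at this
  have b2 : |⟪d, A (vh i)⟫| ≤ 2 / (α0 + 2) * ‖η‖ * ‖d‖ := by
    have := eta_quad_bound α0 hα0 η v hortho A hA d (vh i)
    rwa [hvh i, mul_one] at this
  have b3 : |⟪vh i, (Ah - A) (vh i)⟫| ≤ ε := by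
    calc |⟪vh i, (Ah - A) (vh i)⟫| ≤ ‖vh i‖ * ‖(Ah - A) (vh i)‖ :=
          abs_real_inner_le_norm _ _
      _ ≤ ‖vh i‖ * (‖Ah - A‖ * ‖vh i‖) :=
          mul_le_mul_of_nonneg_left ((Ah - A).le_opNorm _) (norm_nonneg _)
      _ = ‖Ah - A‖ := by rw [hvh i]; ring
      _ ≤ ε := hAh
  have hkey : η i - c * ⟪vh i, Ah (vh i)⟫ =
      -(c * (⟪v i, A d⟫ + ⟪d, A (vh i)⟫ + ⟪vh i, (Ah - A) (vh i)⟫)) := by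
    rw [hηi, hsplit]; ring
  rw [hkey, abs_neg, abs_mul, abs_of_pos hcpos]
  have htri : |⟪v i, A d⟫ + ⟪d, A (vh i)⟫ + ⟪vh i, (Ah - A) (vh i)⟫| ≤
      |⟪v i, A d⟫| + |⟪d, A (vh i)⟫| + |⟪vh i, (Ah - A) (vh i)⟫| :=
    (abs_add_le _ _).trans (by gcongr; exact abs_add_le _ _)
  have hone : c * (2 / (α0 + 2)) = 1 := by rw [hc]; field_simp
  have hdnn : 0 ≤ ‖d‖ := norm_nonneg d
  have hηnn : 0 ≤ ‖η‖ := norm_nonneg η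
  have htot : |⟪v i, A d⟫| + |⟪d, A (vh i)⟫| + |⟪vh i, (Ah - A) (vh i)⟫| ≤
      2 / (α0 + 2) * ‖η‖ * ‖d‖ + 2 / (α0 + 2) * ‖η‖ * ‖d‖ + ε := by linarith
  have hmain := mul_le_mul_of_nonneg_left (htri.trans htot) hcpos.le
  have hcomp : c * (2 / (α0 + 2) * ‖η‖ * ‖d‖ + 2 / (α0 + 2) * ‖η‖ * ‖d‖ + ε)
      = 2 * ‖η‖ * ‖d‖ + c * ε := by
    rw [hc]; field_simp; ring
  have hlast : c * ε ≤ c * (1 + 2 * ‖d‖) * ε := by nlinarith [mul_nonneg (mul_nonneg hcpos.le hdnn) hεnn]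
  linarith
end
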